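/- arXiv:1509.03332 — 2 statements merged into one kernel-verified Lean document; each statement's English description precedes it below -/
import Mathlib

section
/- Let n ≥ 6 and let P be a finite set of points in the plane in general position with pairwise distinct x-coordinates, such that P contains no n points in convex position, no n-cup, and no (n−1)-cap. Let Q' ⊆ P be the set of points q' for which there exists a point q ∈ P together with an (n−2)-cup ending at q, an (n−2)-cap (q, u₂,…,u_{n−2}) starting at q, and an (n−1)-cup (q, w₂,…,w_{n−1}) starting at q, such that q' = u₂ = w_{n−1}. Then (n−2)·|Q'| ≤ |P|. -/
/-- A finite set of points in the plane is in general position if no three of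
its points are collinear. -/
def GeneralPosition (P : Finset (ℝ × ℝ)) : Prop :=
  ∀ p ∈ P, ∀ q ∈ P, ∀ r ∈ P, p ≠ q → p ≠ r → q ≠ r →
    ¬ Collinear ℝ ({p, q, r} : Set (ℝ × ℝ))

/-- A finite set of points is in convex position if no point of the set lies in
the convex hull of the other points. -/
def ConvexPosition (S : Finset (ℝ × ℝ)) : Prop :=
  ∀ p ∈ S, p ∉ convexHull ℝ ((S : Set (ℝ × ℝ)) \ {p})

/-- The ptSlope of the line through two points (with distinct x-coordinates). -/
noncomputable def ptSlope (p q : ℝ × ℝ) : ℝ := (q.2 - p.2) / (q.1 - p.1)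

/-- The points of `P` have pairwise distinct x-coordinates. -/
def DistinctX (P : Finset (ℝ × ℝ)) : Prop :=
  ∀ p ∈ P, ∀ q ∈ P, p ≠ q → p.1 ≠ q.1

/-- A `t`-cup in `P`: a sequence `q 0, …, q (t-1)` of points of `P` with strictly
increasing x-coordinates and non-decreasing slopes of consecutive segments. -/
def IsGCup (P : Finset (ℝ × ℝ)) (t : ℕ) (q : ℕ → ℝ × ℝ) : Prop :=
  (∀ i, i < t → q i ∈ P) ∧
  (∀ i, i + 1 < t → (q i).1 < (q (i + 1)).1) ∧
  (∀ i, i + 2 < t → ptSlope (q i) (q (i + 1)) ≤ ptSlope (q (i + 1)) (q (i + 2)))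

/-- A `t`-cap in `P`: a sequence of points of `P` with strictly increasing
x-coordinates and non-increasing slopes of consecutive segments. -/
def IsGCap (P : Finset (ℝ × ℝ)) (t : ℕ) (q : ℕ → ℝ × ℝ) : Prop :=
  (∀ i, i < t → q i ∈ P) ∧
  (∀ i, i + 1 < t → (q i).1 < (q (i + 1)).1) ∧
  (∀ i, i + 2 < t → ptSlope (q (i + 1)) (q (i + 2)) ≤ ptSlope (q i) (q (i + 1)))



lemma slope_mul {p q : ℝ × ℝ} (h : p.1 < q.1) :
    ptSlope p q * (q.1 - p.1) = q.2 - p.2 := by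
  unfold ptSlope
  rw [div_mul_cancel₀]
  intro hc; rw [sub_eq_zero] at hc; exact absurd hc.symm h.ne

/-- three-point slope decomposition -/
lemma slope_combo {p q r : ℝ × ℝ} (h1 : p.1 < q.1) (h2 : q.1 < r.1) :
    (r.1 - p.1) * ptSlope p r
      = (q.1 - p.1) * ptSlope p q + (r.1 - q.1) * ptSlope q r := by
  have e1 := slope_mul h1
  have e2 := slope_mul h2
  have e3 := slope_mul (h1.trans h2)
  nlinarith [e1, e2, e3]

lemma slope_mid_le {p q r : ℝ × ℝ} (h1 : p.1 < q.1) (h2 : q.1 < r.1)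
    (h : ptSlope p q ≤ ptSlope q r) :
    ptSlope p q ≤ ptSlope p r ∧ ptSlope p r ≤ ptSlope q r := by
  have e := slope_combo h1 h2
  constructor <;> nlinarith [e]

lemma slope_lt_of_below {p q r : ℝ × ℝ} (h1 : p.1 < q.1) (h2 : q.1 < r.1)
    (h : q.2 < p.2 + ptSlope p r * (q.1 - p.1)) :
    ptSlope p q < ptSlope p r ∧ ptSlope p r < ptSlope q r := by
  have e := slope_combo h1 h2
  have e1 := slope_mul h1
  have e2 := slope_mul h2
  constructor <;> nlinarith

lemma slope_above_of_gt {p q r : ℝ × ℝ} (h1 : p.1 < q.1) (h2 : q.1 < r.1)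
    (h : ptSlope p r < ptSlope p q) :
    p.2 + ptSlope p r * (q.1 - p.1) < q.2 := by
  have e1 := slope_mul h1
  have e3 := slope_mul (h1.trans h2)
  nlinarith

lemma collinear_of_slope_eq {p q r : ℝ × ℝ} (h1 : p.1 < q.1) (h2 : p.1 < r.1)
    (h : ptSlope p q = ptSlope p r) : Collinear ℝ ({p, q, r} : Set (ℝ × ℝ)) := by
  rw [collinear_iff_of_mem (Set.mem_insert p _)]
  refine ⟨q - p, ?_⟩
  have hq : q.1 - p.1 ≠ 0 := by intro hc; rw [sub_eq_zero] at hc; exact absurd hc.symm h1.ne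
  have hr : r.1 - p.1 ≠ 0 := by intro hc; rw [sub_eq_zero] at hc; exact absurd hc.symm h2.ne
  intro z hz
  rcases hz with h' | h' | h'
  · exact ⟨0, by simp [h']⟩
  · exact ⟨1, by simp [h']⟩
  · refine ⟨(r.1 - p.1) / (q.1 - p.1), ?_⟩
    have key : (q.2 - p.2) * (r.1 - p.1) = (r.2 - p.2) * (q.1 - p.1) := by
      have := h
      unfold ptSlope at this
      rw [div_eq_div_iff (by exact sub_ne_zero.mpr h1.ne') (by exact sub_ne_zero.mpr h2.ne')] at this
      linarith
    have c1 : r.1 = (r.1 - p.1) / (q.1 - p.1) * (q.1 - p.1) + p.1 := by field_simp; ring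
    have c2 : r.2 = (r.1 - p.1) / (q.1 - p.1) * (q.2 - p.2) + p.2 := by
      field_simp
      nlinarith [key]
    rw [h']
    ext <;> simp [Prod.smul_def, smul_eq_mul]
    · linarith [c1]
    · linarith [c2]

section cup

variable {P : Finset (ℝ × ℝ)} {t : ℕ} {W : ℕ → ℝ × ℝ}

lemma cup_x_lt (hW : IsGCup P t W) {i j : ℕ} (hij : i < j) (hj : j < t) :
    (W i).1 < (W j).1 := by
  obtain ⟨d, rfl⟩ : ∃ d, j = i + d + 1 := ⟨j - i - 1, by omega⟩
  clear hij
  induction d with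
  | zero => exact hW.2.1 i (by omega)
  | succ d ih =>
      have h1 : (W i).1 < (W (i + d + 1)).1 := ih (by omega)
      have h2 : (W (i + d + 1)).1 < (W (i + d + 2)).1 := hW.2.1 (i + d + 1) (by omega)
      have : i + (d + 1) + 1 = i + d + 2 := by omega
      rw [this]
      linarith

lemma cup_chord_edge (hW : IsGCup P t W) :
    ∀ d i, i + d + 2 < t →
      ptSlope (W i) (W (i + d + 1)) ≤ ptSlope (W (i + d + 1)) (W (i + d + 2)) := by
  intro d
  induction d with
  | zero => intro i hi; simpa using hW.2.2 i (by omega)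
  | succ d ih =>
      intro i hi
      have ih' := ih i (by omega)
      have hx1 : (W i).1 < (W (i + d + 1)).1 := cup_x_lt hW (by omega) (by omega)
      have hx2 : (W (i + d + 1)).1 < (W (i + d + 2)).1 := hW.2.1 _ (by omega)
      have h1 := (slope_mid_le hx1 hx2 ih').2
      have h2 := hW.2.2 (i + d + 1) (by omega)
      have e1 : i + (d + 1) + 1 = i + d + 2 := by omega
      have e2 : i + (d + 1) + 2 = i + d + 3 := by omega
      rw [e1, e2]
      calc ptSlope (W i) (W (i + d + 2)) ≤ ptSlope (W (i + d + 1)) (W (i + d + 2)) := h1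
        _ ≤ ptSlope (W (i + d + 2)) (W (i + d + 3)) := by
            have := hW.2.2 (i + d + 1) (by omega)
            simpa [show i + d + 1 + 1 = i + d + 2 by omega,
                   show i + d + 1 + 2 = i + d + 3 by omega] using this

lemma cup_edge_chord (hW : IsGCup P t W) :
    ∀ d i, i + d + 1 < t →
      ptSlope (W i) (W (i + 1)) ≤ ptSlope (W i) (W (i + d + 1)) := by
  intro d
  induction d with
  | zero => intro i hi; exact le_refl _
  | succ d ih =>
      intro i hi
      have ih' := ih i (by omega)
      have hP1 := cup_chord_edge hW d i (by omega)
      have hx1 : (W i).1 < (W (i + d + 1)).1 := cup_x_lt hW (by omega) (by omega)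
      have hx2 : (W (i + d + 1)).1 < (W (i + d + 2)).1 := hW.2.1 _ (by omega)
      have h1 := (slope_mid_le hx1 hx2 hP1).1
      have e1 : i + (d + 1) + 1 = i + d + 2 := by omega
      rw [e1]
      calc ptSlope (W i) (W (i+1)) ≤ ptSlope (W i) (W (i + d + 1)) := ih'
        _ ≤ ptSlope (W i) (W (i + d + 2)) := by
            have := slope_mid_le hx1 hx2 hP1
            -- slope (W i) (W (i+d+1)) ≤ slope (W i) (W (i+d+2)) :
            -- from combo: mid point i+d+1 between i and i+d+2
            nlinarith [slope_combo hx1 hx2, this.1, this.2]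

lemma cup_chord3 (hW : IsGCup P t W) {i j k : ℕ} (hij : i < j) (hjk : j < k) (hk : k < t) :
    ptSlope (W i) (W j) ≤ ptSlope (W j) (W k) := by
  obtain ⟨d, rfl⟩ : ∃ d, j = i + d + 1 := ⟨j - i - 1, by omega⟩
  obtain ⟨e, rfl⟩ : ∃ e, k = (i + d + 1) + e + 1 := ⟨k - (i+d+1) - 1, by omega⟩
  calc ptSlope (W i) (W (i + d + 1)) ≤ ptSlope (W (i+d+1)) (W (i+d+2)) :=
        cup_chord_edge hW d i (by omega)
    _ ≤ ptSlope (W (i+d+1)) (W (i + d + 1 + e + 1)) := by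
        have := cup_edge_chord hW e (i + d + 1) (by omega)
        simpa [show i + d + 1 + 1 = i + d + 2 by omega] using this

lemma cup_chord3_lt (hgp : GeneralPosition P) (hW : IsGCup P t W) {i j k : ℕ}
    (hij : i < j) (hjk : j < k) (hk : k < t) :
    ptSlope (W i) (W j) < ptSlope (W j) (W k) := by
  rcases lt_or_eq_of_le (cup_chord3 hW hij hjk hk) with h | h
  · exact h
  · exfalso
    have hx1 : (W i).1 < (W j).1 := cup_x_lt hW hij (by omega)
    have hx2 : (W j).1 < (W k).1 := cup_x_lt hW hjk hk
    have hik : ptSlope (W i) (W j) = ptSlope (W i) (W k) := by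
      nlinarith [slope_combo hx1 hx2]
    have hcol := collinear_of_slope_eq hx1 (hx1.trans hx2) hik
    have hne1 : W i ≠ W j := fun hc => hx1.ne (congrArg Prod.fst hc)
    have hne2 : W i ≠ W k := fun hc => (hx1.trans hx2).ne (congrArg Prod.fst hc)
    have hne3 : W j ≠ W k := fun hc => hx2.ne (congrArg Prod.fst hc)
    exact hgp _ (hW.1 i (by omega)) _ (hW.1 j (by omega)) _ (hW.1 k hk)
      hne1 hne2 hne3 hcol

end cup

lemma linmap (a b : ℝ) : IsLinearMap ℝ (fun w : ℝ × ℝ => a * w.1 + b * w.2) := by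
  constructor
  · intro x y; simp; ring
  · intro c x; simp [smul_eq_mul]; ring

lemma sep_of_le {s : Set (ℝ × ℝ)} {p : ℝ × ℝ} (a b r : ℝ)
    (h : ∀ w ∈ s, a * w.1 + b * w.2 ≤ r) (hp : r < a * p.1 + b * p.2) :
    p ∉ convexHull ℝ s := by
  intro hm
  have h2 : a * p.1 + b * p.2 ≤ r := convexHull_min h (convex_halfSpace_le (linmap a b) r) hm
  linarith

lemma sep_of_lt {s : Set (ℝ × ℝ)} {p : ℝ × ℝ} (a b r : ℝ)
    (h : ∀ w ∈ s, a * w.1 + b * w.2 < r) (hp : r ≤ a * p.1 + b * p.2) :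
    p ∉ convexHull ℝ s := by
  intro hm
  have h2 : a * p.1 + b * p.2 < r := convexHull_min h (convex_halfSpace_lt (linmap a b) r) hm
  linarith

/-- A cup of length `m` together with a point strictly above its chord
(with x-coordinate strictly inside) gives `m+1` points in convex position. -/
lemma cup_plus_point {P : Finset (ℝ × ℝ)} {m : ℕ} {W : ℕ → ℝ × ℝ} {z : ℝ × ℝ}
    (hgp : GeneralPosition P) (hm : 3 ≤ m) (hW : IsGCup P m W) (hz : z ∈ P)
    (hzW : ∀ j, j < m → z ≠ W j)
    (hx0 : (W 0).1 < z.1) (hx1 : z.1 < (W (m - 1)).1)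
    (habove : (W 0).2 + ptSlope (W 0) (W (m - 1)) * (z.1 - (W 0).1) < z.2) :
    ∃ S ⊆ P, S.card = m + 1 ∧ ConvexPosition S := by
  classical
  set mch := ptSlope (W 0) (W (m - 1)) with hmch
  have hxm : (W 0).1 < (W (m-1)).1 := hx0.trans hx1
  have hinj : Set.InjOn W (Finset.range m) := by
    intro i hi j hj hij
    simp only [Finset.coe_range, Set.mem_Iio] at hi hj
    by_contra hne
    rcases Nat.lt_or_ge i j with h | h
    · exact (cup_x_lt hW h hj).ne (congrArg Prod.fst hij)
    · have : j < i := by omega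
      exact (cup_x_lt hW this hi).ne (congrArg Prod.fst hij.symm)
  set T : Finset (ℝ × ℝ) := (Finset.range m).image W with hT
  have hzT : z ∉ T := by
    intro hzm
    simp only [hT, Finset.mem_image, Finset.mem_range] at hzm
    obtain ⟨j, hj, hjW⟩ := hzm
    exact hzW j hj hjW.symm
  refine ⟨insert z T, ?_, ?_, ?_⟩
  · intro w hw
    simp only [Finset.mem_insert, hT, Finset.mem_image, Finset.mem_range] at hw
    rcases hw with rfl | ⟨j, hj, rfl⟩
    · exact hz
    · exact hW.1 j hj
  · rw [Finset.card_insert_of_notMem hzT, hT, Finset.card_image_of_injOn hinj,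
      Finset.card_range]
  · -- convex position
    intro p hp
    have hmem : ∀ w : ℝ × ℝ, w ∈ (↑(insert z T) : Set (ℝ × ℝ)) \ {p} →
        (w = z ∧ w ≠ p) ∨ ∃ j, j < m ∧ w = W j ∧ w ≠ p := by
      intro w hw
      obtain ⟨hw1, hw2⟩ := hw
      simp only [Finset.coe_insert, Set.mem_insert_iff, hT, Finset.coe_image,
        Finset.coe_range, Set.mem_image, Set.mem_Iio] at hw1
      rcases hw1 with rfl | ⟨j, hj, rfl⟩
      · exact Or.inl ⟨rfl, hw2⟩
      · exact Or.inr ⟨j, hj, rfl, hw2⟩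
    -- chord fact : every cup point is on or below the chord
    have hbelow : ∀ j, j < m → (W j).2 ≤ (W 0).2 + mch * ((W j).1 - (W 0).1) := by
      intro j hj
      rcases Nat.eq_zero_or_pos j with rfl | hj0
      · simp
      rcases Nat.lt_or_ge j (m-1) with hjm | hjm
      · have h3 := cup_chord3 hW hj0 hjm (by omega)
        have hxj : (W 0).1 < (W j).1 := cup_x_lt hW hj0 (by omega)
        have hxj' : (W j).1 < (W (m-1)).1 := cup_x_lt hW hjm (by omega)
        have := (slope_mid_le hxj hxj' h3).1
        nlinarith [slope_mul hxj]
      · have : j = m - 1 := by omega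
        subst this
        nlinarith [slope_mul hxm]
    simp only [Finset.mem_insert] at hp
    rcases hp with rfl | hpT
    · -- p = z : separate by the chord line
      refine sep_of_le (-mch) 1 (-mch * (W 0).1 + (W 0).2) ?_ (by nlinarith)
      intro w hw
      rcases hmem w hw with ⟨rfl, hne⟩ | ⟨j, hj, rfl, _⟩
      · exact absurd rfl hne
      · have := hbelow j hj
        nlinarith
    · simp only [hT, Finset.mem_image, Finset.mem_range] at hpT
      obtain ⟨j, hj, rfl⟩ := hpT
      rcases Nat.eq_zero_or_pos j with rfl | hj0
      · -- leftmost point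
        refine sep_of_lt (-1) 0 (-(W 0).1) ?_ (by simp)
        intro w hw
        rcases hmem w hw with ⟨rfl, _⟩ | ⟨i, hi, rfl, hne⟩
        · simpa using hx0
        · have hi0 : i ≠ 0 := fun hc => hne (by rw [hc])
          have := cup_x_lt hW (Nat.pos_of_ne_zero hi0) hi
          simp only [neg_mul, one_mul, zero_mul, add_zero]
          linarith
      rcases Nat.lt_or_ge j (m-1) with hjm | hjm
      · -- interior point: tangent line
        obtain ⟨jj, rfl⟩ : ∃ jj, j = jj + 1 := ⟨j - 1, by omega⟩
        set mj := (ptSlope (W jj) (W (jj+1)) + ptSlope (W (jj+1)) (W (jj+2))) / 2 with hmj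
        have hedge : ptSlope (W jj) (W (jj+1)) < ptSlope (W (jj+1)) (W (jj+2)) :=
          cup_chord3_lt hgp hW (by omega) (by omega) (by omega)
        have hxjj : (W jj).1 < (W (jj+1)).1 := cup_x_lt hW (by omega) (by omega)
        have hxjj2 : (W (jj+1)).1 < (W (jj+2)).1 := cup_x_lt hW (by omega) (by omega)
        -- all other cup points strictly below tangent line at W (jj+1) with slope mj
        have hWi : ∀ i, i < m → i ≠ jj + 1 →
            mj * (W i).1 - (W i).2 < mj * (W (jj+1)).1 - (W (jj+1)).2 := by
          intro i hi hine
          rcases Nat.lt_or_ge i (jj+1) with hij | hij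
          · have hxi : (W i).1 < (W (jj+1)).1 := cup_x_lt hW hij (by omega)
            have hs : ptSlope (W i) (W (jj+1)) ≤ ptSlope (W jj) (W (jj+1)) := by
              rcases Nat.lt_or_ge i jj with hijj | hijj
              · have h3 := cup_chord3 hW hijj (Nat.lt_succ_self jj) (by omega)
                exact (slope_mid_le (cup_x_lt hW hijj (by omega)) hxjj h3).2
              · have : i = jj := by omega
                subst this; exact le_refl _
            have : ptSlope (W i) (W (jj+1)) < mj := by
              rw [hmj]; linarith
            nlinarith [slope_mul hxi]
          · have hij' : jj + 1 < i := by omega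
            have hxi : (W (jj+1)).1 < (W i).1 := cup_x_lt hW hij' hi
            have hs : ptSlope (W (jj+1)) (W (jj+2)) ≤ ptSlope (W (jj+1)) (W i) := by
              obtain ⟨d, rfl⟩ : ∃ d, i = jj + 1 + d + 1 := ⟨i - jj - 2, by omega⟩
              have := cup_edge_chord hW d (jj+1) (by omega)
              simpa [show jj + 1 + 1 = jj + 2 by omega] using this
            have : mj < ptSlope (W (jj+1)) (W i) := by
              rw [hmj]; linarith
            nlinarith [slope_mul hxi]
        refine sep_of_lt mj (-1) (mj * (W (jj+1)).1 - (W (jj+1)).2) ?_ (by ring_nf; linarith)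
        intro w hw
        rcases hmem w hw with ⟨rfl, _⟩ | ⟨i, hi, rfl, hne⟩
        · -- the extra point z is above the tangent line
          have hA := hWi 0 (by omega) (by omega)
          have hB := hWi (m-1) (by omega) (by omega)
          have hym : (W (m-1)).2 = (W 0).2 + mch * ((W (m-1)).1 - (W 0).1) := by
            nlinarith [slope_mul hxm]
          simp only [neg_one_mul]
          nlinarith [mul_pos (sub_pos.mpr hx1) (sub_pos.mpr hx0),
            mul_lt_mul_of_pos_right hA (sub_pos.mpr hx1),
            mul_lt_mul_of_pos_right hB (sub_pos.mpr hx0),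
            mul_lt_mul_of_pos_right habove (sub_pos.mpr hxm)]
        · have hine : i ≠ jj + 1 := by
            intro hc; exact hne (by rw [hc])
          have := hWi i hi hine
          simp only [neg_one_mul]; linarith
      · -- rightmost point
        have : j = m - 1 := by omega
        subst this
        refine sep_of_lt 1 0 ((W (m-1)).1) ?_ (by simp)
        intro w hw
        rcases hmem w hw with ⟨rfl, _⟩ | ⟨i, hi, rfl, hne⟩
        · simpa using hx1
        · have hi' : i < m - 1 := by
            rcases Nat.lt_or_ge i (m-1) with h | h
            · exact h
            · exfalso; exact hne (by rw [show i = m - 1 by omega])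
          have := cup_x_lt hW hi' (by omega)
          simp only [one_mul, zero_mul, add_zero]
          linarith

section mate

variable {P : Finset (ℝ × ℝ)} {k : ℕ} {q q' : ℝ × ℝ} {V U : ℕ → ℝ × ℝ}

/-- last slope of the cup `V` ending at `q` is at most the first slope of the
cap `U` starting at `q`, since otherwise they would glue to a `(k+5)`-cap. -/
lemma mate_ab (hcap : ¬ ∃ c, IsGCap P (k + 5) c)
    (hV : IsGCup P (k + 4) V) (hVq : V (k + 3) = q)
    (hU : IsGCap P (k + 4) U) (hUq : U 0 = q) (hUq' : q' = U 1) :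
    ptSlope (V (k + 2)) q ≤ ptSlope q q' := by
  by_contra hab
  push_neg at hab
  apply hcap
  refine ⟨fun i => if i = 0 then V (k + 2) else U (i - 1), ?_, ?_, ?_⟩
  · intro i hi
    by_cases h0 : i = 0
    · simp only [h0, if_pos rfl]
      exact hV.1 (k + 2) (by omega)
    · simp only [if_neg h0]
      exact hU.1 (i - 1) (by omega)
  · intro i hi
    by_cases h0 : i = 0
    · subst h0
      simp only [if_pos rfl, if_neg (by omega : (0:ℕ) + 1 ≠ 0)]
      have := hV.2.1 (k + 2) (by omega)
      rw [show k + 2 + 1 = k + 3 by omega, hVq] at this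
      simpa [hUq] using this
    · simp only [if_neg h0, if_neg (by omega : i + 1 ≠ 0)]
      have := hU.2.1 (i - 1) (by omega)
      rw [show i - 1 + 1 = i by omega] at this
      rw [show i + 1 - 1 = i by omega]
      exact this
  · intro i hi
    by_cases h0 : i = 0
    · subst h0
      simp only [if_pos rfl, if_neg (by omega : (0:ℕ) + 1 ≠ 0),
        if_neg (by omega : (0:ℕ) + 2 ≠ 0)]
      norm_num
      rw [hUq, ← hUq']
      exact le_of_lt (by simpa [hVq] using hab)
    · simp only [if_neg h0, if_neg (by omega : i + 1 ≠ 0), if_neg (by omega : i + 2 ≠ 0)]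
      have := hU.2.2 (i - 1) (by omega)
      rw [show i - 1 + 1 = i by omega, show i - 1 + 2 = i + 1 by omega] at this
      rw [show i + 1 - 1 = i by omega, show i + 2 - 1 = i + 1 by omega]
      exact this


/-- No point of `P` to the right of the mate `q'` sees it with slope at least
`ptSlope q q'`; otherwise the cup `V` extends to a `(k+6)`-cup. -/
lemma mate_no_high (hcup : ¬ ∃ c, IsGCup P (k + 6) c) (hcap : ¬ ∃ c, IsGCap P (k + 5) c)
    (hV : IsGCup P (k + 4) V) (hVq : V (k + 3) = q)
    (hU : IsGCap P (k + 4) U) (hUq : U 0 = q) (hUq' : q' = U 1)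
    (hq'P : q' ∈ P) :
    ∀ Z ∈ P, q'.1 < Z.1 → ptSlope q' Z < ptSlope q q' := by
  intro Z hZ hxZ
  by_contra hge
  push_neg at hge
  have hab := mate_ab hcap hV hVq hU hUq hUq'
  have hqq' : q.1 < q'.1 := by
    have := hU.2.1 0 (by omega)
    rwa [hUq, ← hUq'] at this
  apply hcup
  set c : ℕ → ℝ × ℝ := fun i => if i < k + 4 then V i else if i = k + 4 then q' else Z
    with hc
  have hcV : ∀ i, i < k + 4 → c i = V i := by
    intro i hi; simp only [hc]; rw [if_pos hi]
  have hcq' : c (k + 4) = q' := by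
    simp [hc]
  have hcZ : ∀ i, k + 4 < i → c i = Z := by
    intro i hi; simp only [hc]; rw [if_neg (by omega), if_neg (by omega)]
  refine ⟨c, ?_, ?_, ?_⟩
  · intro i hi
    rcases (by omega : i < k + 4 ∨ i = k + 4 ∨ k + 4 < i) with h | h | h
    · rw [hcV i h]; exact hV.1 i h
    · rw [h, hcq']; exact hq'P
    · rw [hcZ i h]; exact hZ
  · intro i hi
    rcases (by omega : i + 1 < k + 4 ∨ i + 1 = k + 4 ∨ i + 1 = k + 5) with h | h | h
    · rw [hcV i (by omega), hcV (i+1) h]; exact hV.2.1 i h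
    · rw [hcV i (by omega), show i + 1 = k + 4 from h, hcq',
        show i = k + 3 by omega, hVq]
      exact hqq'
    · rw [show i = k + 4 by omega, hcq', hcZ (k + 5) (by omega)]
      exact hxZ
  · intro i hi
    rcases (by omega : i + 2 < k + 4 ∨ i + 2 = k + 4 ∨ i + 2 = k + 5 ∨ i + 2 = k + 6)
      with h | h | h | h
    · rw [hcV i (by omega), hcV (i+1) (by omega), hcV (i+2) h]
      exact hV.2.2 i h
    · rw [hcV i (by omega), hcV (i+1) (by omega), show i + 2 = k + 4 from h, hcq',
        show i + 1 = k + 3 by omega, hVq, show i = k + 2 by omega]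
      exact hab
    · rw [hcV i (by omega), show i + 1 = k + 4 by omega, hcq',
        hcZ (i + 2) (by omega), show i = k + 3 by omega, hVq]
      exact hge
    · omega

end mate
/-- Key claim: the x-strips of two mates are essentially disjoint. -/
lemma key_strips {P : Finset (ℝ × ℝ)} {k : ℕ}
    (hgp : GeneralPosition P)
    (hconv : ¬ ∃ S ⊆ P, S.card = k + 6 ∧ ConvexPosition S)
    (hcup : ¬ ∃ c, IsGCup P (k + 6) c) (hcap : ¬ ∃ c, IsGCap P (k + 5) c)
    {q1 q1' q2 q2' : ℝ × ℝ} {V1 U1 W1 V2 U2 W2 : ℕ → ℝ × ℝ}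
    (hV1 : IsGCup P (k + 4) V1) (hV1q : V1 (k + 3) = q1)
    (hU1 : IsGCap P (k + 4) U1) (hU1q : U1 0 = q1)
    (hW1 : IsGCup P (k + 5) W1) (hW1q : W1 0 = q1)
    (hU1q' : q1' = U1 1) (hW1q' : q1' = W1 (k + 4))
    (hV2 : IsGCup P (k + 4) V2) (hV2q : V2 (k + 3) = q2)
    (hU2 : IsGCap P (k + 4) U2) (hU2q : U2 0 = q2)
    (hW2 : IsGCup P (k + 5) W2) (hW2q : W2 0 = q2)
    (hU2q' : q2' = U2 1) (hW2q' : q2' = W2 (k + 4))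
    (hx12 : q1'.1 < q2'.1) :
    q1'.1 ≤ q2.1 := by
  by_contra hlt
  push_neg at hlt
  -- memberships and basic x facts
  have hq1P : q1 ∈ P := hU1q ▸ hU1.1 0 (by omega)
  have hq2P : q2 ∈ P := hU2q ▸ hU2.1 0 (by omega)
  have hq1'P : q1' ∈ P := hU1q' ▸ hU1.1 1 (by omega)
  have hq2'P : q2' ∈ P := hU2q' ▸ hU2.1 1 (by omega)
  have hxq1 : q1.1 < q1'.1 := by
    have := hU1.2.1 0 (by omega); rwa [hU1q, ← hU1q'] at this
  have hxq2 : q2.1 < q2'.1 := by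
    have := hU2.2.1 0 (by omega); rwa [hU2q, ← hU2q'] at this
  -- s < b1
  have hs_b1 : ptSlope q1' q2' < ptSlope q1 q1' :=
    mate_no_high hcup hcap hV1 hV1q hU1 hU1q hU1q' hq1'P q2' hq2'P hx12
  -- t ≤ b2
  have ht_b2 : ptSlope q2' (U2 2) ≤ ptSlope q2 q2' := by
    have := hU2.2.2 0 (by omega)
    rwa [show (0:ℕ)+1 = 1 by omega, show (0:ℕ)+2 = 2 by omega, hU2q, ← hU2q'] at this
  rcases le_or_gt (ptSlope q2' (U2 2)) (ptSlope q1' q2') with hst | hst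
  · -- glue a (k+5)-cap (q1, q1', U2 1, U2 2, …)
    apply hcap
    set C : ℕ → ℝ × ℝ := fun i => if i = 0 then q1 else if i = 1 then q1' else U2 (i - 1)
      with hC
    have hC0 : C 0 = q1 := by simp [hC]
    have hC1 : C 1 = q1' := by simp [hC]
    have hCU : ∀ i, 2 ≤ i → C i = U2 (i - 1) := by
      intro i hi; simp only [hC]; rw [if_neg (by omega), if_neg (by omega)]
    refine ⟨C, ?_, ?_, ?_⟩
    · intro i hi
      rcases (by omega : i = 0 ∨ i = 1 ∨ 2 ≤ i) with h | h | h
      · rw [h, hC0]; exact hq1P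
      · rw [h, hC1]; exact hq1'P
      · rw [hCU i h]; exact hU2.1 (i - 1) (by omega)
    · intro i hi
      rcases (by omega : i = 0 ∨ i = 1 ∨ 2 ≤ i) with h | h | h
      · rw [h, hC0, hC1]; exact hxq1
      · rw [h, hC1, hCU 2 (by omega), show (2:ℕ) - 1 = 1 by omega, ← hU2q']
        exact hx12
      · rw [hCU i h, hCU (i+1) (by omega), show i + 1 - 1 = i by omega]
        have := hU2.2.1 (i-1) (by omega)
        rwa [show i - 1 + 1 = i by omega] at this
    · intro i hi
      rcases (by omega : i = 0 ∨ i = 1 ∨ 2 ≤ i) with h | h | h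
      · rw [h, hC0, hC1, hCU 2 (by omega), show (2:ℕ) - 1 = 1 by omega, ← hU2q']
        exact hs_b1.le
      · rw [h, hC1, hCU 2 (by omega), hCU 3 (by omega),
          show (2:ℕ) - 1 = 1 by omega, show (3:ℕ) - 1 = 2 by omega, ← hU2q']
        exact hst
      · rw [hCU i h, hCU (i+1) (by omega), hCU (i+2) (by omega),
          show i + 1 - 1 = i by omega, show i + 2 - 1 = i + 1 by omega]
        have := hU2.2.2 (i-1) (by omega)
        rwa [show i - 1 + 1 = i by omega, show i - 1 + 2 = i + 1 by omega] at this
  · -- s < t ≤ b2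
    have hs_b2 : ptSlope q1' q2' < ptSlope q2 q2' := lt_of_lt_of_le hst ht_b2
    by_cases honW : ∃ j, j < k + 5 ∧ q1' = W2 j
    · obtain ⟨j, hj, hjq⟩ := honW
      have hj0 : j ≠ 0 := by
        intro h; rw [h, hW2q] at hjq; rw [hjq] at hlt; exact lt_irrefl _ hlt
      have hjm : j ≠ k + 4 := by
        intro h; rw [h, ← hW2q'] at hjq; rw [hjq] at hx12; exact lt_irrefl _ hx12
      have h3 := cup_chord3 hW2 (Nat.pos_of_ne_zero hj0) (by omega : j < k + 4)
        (by omega : k + 4 < k + 5)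
      have hxa : (W2 0).1 < (W2 j).1 := cup_x_lt hW2 (Nat.pos_of_ne_zero hj0) (by omega)
      have hxb : (W2 j).1 < (W2 (k+4)).1 := cup_x_lt hW2 (by omega) (by omega)
      have := (slope_mid_le hxa hxb h3).2
      rw [hW2q, ← hW2q', ← hjq] at this
      linarith
    · push_neg at honW
      rcases lt_trichotomy q1'.2 (q2.2 + ptSlope q2 q2' * (q1'.1 - q2.1)) with hy | hy | hy
      · have := (slope_lt_of_below hlt hx12 hy).2
        linarith
      · -- collinear
        have hsl : ptSlope q2 q1' = ptSlope q2 q2' := by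
          have e1 := slope_mul hlt
          have hne : q1'.1 - q2.1 ≠ 0 := by intro hc; rw [sub_eq_zero] at hc; exact hlt.ne hc.symm
          apply mul_right_cancel₀ hne
          nlinarith [e1, hy]
        have hcol := collinear_of_slope_eq hlt (hlt.trans hx12) hsl
        exact hgp q2 hq2P q1' hq1'P q2' hq2'P
          (fun hc => hlt.ne (congrArg Prod.fst hc))
          (fun hc => (hlt.trans hx12).ne (congrArg Prod.fst hc))
          (fun hc => hx12.ne (congrArg Prod.fst hc)) hcol
      · -- above the chord: convex position
        apply hconv
        have hres := cup_plus_point hgp (by omega : 3 ≤ k + 5) hW2 hq1'P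
          (by
            intro j hj
            exact honW j hj)
          (by rw [hW2q]; exact hlt)
          (by rw [show k + 5 - 1 = k + 4 by omega, ← hW2q']; exact hx12)
          (by
            rw [show k + 5 - 1 = k + 4 by omega, hW2q, ← hW2q']
            exact hy)
        obtain ⟨S, hSP, hScard, hSconv⟩ := hres
        exact ⟨S, hSP, by omega, hSconv⟩

/-- Claim 2: the set `Q'` of mates satisfies `(n-2)·|Q'| ≤ |P|`. -/
theorem mates_sparse (n : ℕ) (hn : 6 ≤ n) (P : Finset (ℝ × ℝ))
    (hgp : GeneralPosition P) (hx : DistinctX P)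
    (hconv : ¬ ∃ S ⊆ P, S.card = n ∧ ConvexPosition S)
    (hcup : ¬ ∃ c, IsGCup P n c) (hcap : ¬ ∃ c, IsGCap P (n - 1) c)
    (Q' : Finset (ℝ × ℝ))
    (hQ' : ∀ q' : ℝ × ℝ, q' ∈ Q' ↔ q' ∈ P ∧
      ∃ (q : ℝ × ℝ) (V U W : ℕ → ℝ × ℝ),
        IsGCup P (n - 2) V ∧ V (n - 3) = q ∧
        IsGCap P (n - 2) U ∧ U 0 = q ∧
        IsGCup P (n - 1) W ∧ W 0 = q ∧
        q' = U 1 ∧ q' = W (n - 2)) :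
    (n - 2) * Q'.card ≤ P.card := by
  classical
  obtain ⟨k, rfl⟩ : ∃ k, n = k + 6 := ⟨n - 6, by omega⟩
  simp only [show k + 6 - 2 = k + 4 from by omega, show k + 6 - 3 = k + 3 from by omega,
    show k + 6 - 1 = k + 5 from by omega] at hQ' hcap ⊢
  -- choose witnesses for each mate
  have hchoice : ∀ r : ℝ × ℝ, ∃ (q : ℝ × ℝ) (V U W : ℕ → ℝ × ℝ), r ∈ Q' →
      IsGCup P (k + 4) V ∧ V (k + 3) = q ∧
      IsGCap P (k + 4) U ∧ U 0 = q ∧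
      IsGCup P (k + 5) W ∧ W 0 = q ∧
      r = U 1 ∧ r = W (k + 4) := by
    intro r
    by_cases hr : r ∈ Q'
    · obtain ⟨-, q, V, U, W, h⟩ := (hQ' r).mp hr
      exact ⟨q, V, U, W, fun _ => h⟩
    · exact ⟨0, fun _ => 0, fun _ => 0, fun _ => 0, fun h => absurd h hr⟩
  choose qf Vf Uf Wf hM using hchoice
  -- the associated blocks of k+4 points
  set T : ℝ × ℝ → Finset (ℝ × ℝ) :=
    fun r => (Finset.range (k + 4)).image (fun i => Wf r (i + 1)) with hT
  have hTsub : ∀ r ∈ Q', T r ⊆ P := by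
    intro r hr w hw
    simp only [hT, Finset.mem_image, Finset.mem_range] at hw
    obtain ⟨i, hi, rfl⟩ := hw
    exact (hM r hr).2.2.2.2.1.1 (i + 1) (by omega)
  have hTx : ∀ r ∈ Q', ∀ w ∈ T r, (qf r).1 < w.1 ∧ w.1 ≤ r.1 := by
    intro r hr w hw
    obtain ⟨hV, hVq, hU, hUq, hW, hWq, hUq', hWq'⟩ := hM r hr
    simp only [hT, Finset.mem_image, Finset.mem_range] at hw
    obtain ⟨i, hi, rfl⟩ := hw
    constructor
    · have := cup_x_lt hW (by omega : 0 < i + 1) (by omega)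
      rwa [hWq] at this
    · rcases (by omega : i + 1 < k + 4 ∨ i + 1 = k + 4) with h | h
      · have := cup_x_lt hW (by omega : i + 1 < k + 4) (by omega)
        rw [← hWq'] at this
        exact this.le
      · rw [h, ← hWq']
  have hTcard : ∀ r ∈ Q', (T r).card = k + 4 := by
    intro r hr
    obtain ⟨hV, hVq, hU, hUq, hW, hWq, hUq', hWq'⟩ := hM r hr
    rw [hT]
    rw [Finset.card_image_of_injOn, Finset.card_range]
    intro i hi j hj hij
    simp only [Finset.coe_range, Set.mem_Iio] at hi hj
    by_contra hne
    rcases Nat.lt_or_ge i j with h | h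
    · exact (cup_x_lt hW (by omega : i + 1 < j + 1) (by omega)).ne (congrArg Prod.fst hij)
    · have : j < i := by omega
      exact (cup_x_lt hW (by omega : j + 1 < i + 1) (by omega)).ne
        (congrArg Prod.fst hij.symm)
  -- key disjointness
  have hkey : ∀ r1 ∈ Q', ∀ r2 ∈ Q', r1.1 < r2.1 → r1.1 ≤ (qf r2).1 := by
    intro r1 hr1 r2 hr2 h12
    obtain ⟨hV1, hV1q, hU1, hU1q, hW1, hW1q, hU1q', hW1q'⟩ := hM r1 hr1
    obtain ⟨hV2, hV2q, hU2, hU2q, hW2, hW2q, hU2q', hW2q'⟩ := hM r2 hr2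
    exact key_strips hgp hconv hcup hcap hV1 hV1q hU1 hU1q hW1 hW1q hU1q' hW1q'
      hV2 hV2q hU2 hU2q hW2 hW2q hU2q' hW2q' h12
  have hdisj : ∀ r1 ∈ Q', ∀ r2 ∈ Q', r1 ≠ r2 → Disjoint (T r1) (T r2) := by
    intro r1 hr1 r2 hr2 hne
    have hP1 : r1 ∈ P := ((hQ' r1).mp hr1).1
    have hP2 : r2 ∈ P := ((hQ' r2).mp hr2).1
    have hxne : r1.1 ≠ r2.1 := hx r1 hP1 r2 hP2 hne
    rw [Finset.disjoint_left]
    intro a ha1 ha2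
    have h1 := hTx r1 hr1 a ha1
    have h2 := hTx r2 hr2 a ha2
    rcases lt_or_gt_of_ne hxne with h | h
    · have := hkey r1 hr1 r2 hr2 h
      linarith [h1.2, h2.1]
    · have := hkey r2 hr2 r1 hr1 h
      linarith [h1.1, h2.2]
  calc (k + 4) * Q'.card = ∑ r ∈ Q', (T r).card := by
        rw [Finset.sum_congr rfl hTcard, Finset.sum_const, smul_eq_mul, mul_comm]
    _ = (Q'.biUnion T).card := (Finset.card_biUnion hdisj).symm
    _ ≤ P.card := by
        apply Finset.card_le_card
        intro w hw
        rw [Finset.mem_biUnion] at hw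
        obtain ⟨r, hr, hwr⟩ := hw
        exact hTsub r hr hwr
end

section
/- Let n ≥ 5, let m be a positive integer, and let f assign a real number f(i,j) to each pair 1 ≤ i < j ≤ m. Suppose f is (n, n−1)-free (no n-cup and no (n−1)-cap), and suppose additionally that no index is simultaneously the last element of an (n−2)-cup and the first element of both an (n−2)-cap and an (n−1)-cup. Then m ≤ C(2n−5, n−2) − C(2n−7, n−3) + C(2n−8, n−4), where C(a,b) denotes the binomial coefficient. -/
/-- A `t`-cup with respect to `f` on indices `{1, …, m}`: a strictly increasing
sequence `q 0 < q 1 < ⋯ < q (t-1)` of indices, with non-decreasing values of `f`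
on consecutive pairs. -/
def IsCup (m : ℕ) (f : ℕ → ℕ → ℝ) (t : ℕ) (q : ℕ → ℕ) : Prop :=
  (∀ i, i < t → 1 ≤ q i ∧ q i ≤ m) ∧
  (∀ i, i + 1 < t → q i < q (i + 1)) ∧
  (∀ i, i + 2 < t → f (q i) (q (i + 1)) ≤ f (q (i + 1)) (q (i + 2)))

/-- A `t`-cap with respect to `f` on indices `{1, …, m}`: a strictly increasing
sequence of indices with non-increasing values of `f` on consecutive pairs. -/
def IsCap (m : ℕ) (f : ℕ → ℕ → ℝ) (t : ℕ) (q : ℕ → ℕ) : Prop :=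
  (∀ i, i < t → 1 ≤ q i ∧ q i ≤ m) ∧
  (∀ i, i + 1 < t → q i < q (i + 1)) ∧
  (∀ i, i + 2 < t → f (q (i + 1)) (q (i + 2)) ≤ f (q i) (q (i + 1)))

/-- `f` is `(k, l)`-free: there is no `k`-cup and no `l`-cap with respect to `f`. -/
def IsFree (m : ℕ) (f : ℕ → ℕ → ℝ) (k l : ℕ) : Prop :=
  (¬ ∃ q, IsCup m f k q) ∧ (¬ ∃ q, IsCap m f l q)

/- ### Auxiliary development -/

/-- A `t`-cup with points inside a finset `S`. -/
def CupIn (f : ℕ → ℕ → ℝ) (S : Finset ℕ) (t : ℕ) (q : ℕ → ℕ) : Prop :=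
  (∀ i, i < t → q i ∈ S) ∧
  (∀ i, i + 1 < t → q i < q (i + 1)) ∧
  (∀ i, i + 2 < t → f (q i) (q (i + 1)) ≤ f (q (i + 1)) (q (i + 2)))

/-- A `t`-cap with points inside a finset `S`. -/
def CapIn (f : ℕ → ℕ → ℝ) (S : Finset ℕ) (t : ℕ) (q : ℕ → ℕ) : Prop :=
  (∀ i, i < t → q i ∈ S) ∧
  (∀ i, i + 1 < t → q i < q (i + 1)) ∧
  (∀ i, i + 2 < t → f (q (i + 1)) (q (i + 2)) ≤ f (q i) (q (i + 1)))

lemma cupIn_mono {f : ℕ → ℕ → ℝ} {S T : Finset ℕ} {t : ℕ} {q : ℕ → ℕ}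
    (h : S ⊆ T) (hq : CupIn f S t q) : CupIn f T t q :=
  ⟨fun i hi => h (hq.1 i hi), hq.2.1, hq.2.2⟩

lemma capIn_mono {f : ℕ → ℕ → ℝ} {S T : Finset ℕ} {t : ℕ} {q : ℕ → ℕ}
    (h : S ⊆ T) (hq : CapIn f S t q) : CapIn f T t q :=
  ⟨fun i hi => h (hq.1 i hi), hq.2.1, hq.2.2⟩

lemma isCup_iff {m : ℕ} {f : ℕ → ℕ → ℝ} {t : ℕ} {q : ℕ → ℕ} :
    IsCup m f t q ↔ CupIn f (Finset.Icc 1 m) t q := by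
  simp [IsCup, CupIn, Finset.mem_Icc]

lemma isCap_iff {m : ℕ} {f : ℕ → ℕ → ℝ} {t : ℕ} {q : ℕ → ℕ} :
    IsCap m f t q ↔ CapIn f (Finset.Icc 1 m) t q := by
  simp [IsCap, CapIn, Finset.mem_Icc]

lemma extend_cup {f : ℕ → ℕ → ℝ} {S : Finset ℕ} {t : ℕ} {q : ℕ → ℕ} {z : ℕ}
    (hq : CupIn f S (t + 2) q) (hz : z ∈ S) (hlt : q (t + 1) < z)
    (hle : f (q t) (q (t + 1)) ≤ f (q (t + 1)) z) :
    CupIn f S (t + 3) (fun i => if i < t + 2 then q i else z) := by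
  obtain ⟨h1, h2, h3⟩ := hq
  refine ⟨fun i hi => ?_, fun i hi => ?_, fun i hi => ?_⟩
  · by_cases h : i < t + 2
    · simpa [h] using h1 i h
    · simp [h, hz]
  · by_cases h : i + 1 < t + 2
    · have h' : i < t + 2 := by omega
      simpa [h, h'] using h2 i h
    · have h' : i < t + 2 := by omega
      have hi1 : i = t + 1 := by omega
      simp only [if_pos h', if_neg h]
      rw [hi1]; exact hlt
  · by_cases h : i + 2 < t + 2
    · have h1' : i + 1 < t + 2 := by omega
      have h0' : i < t + 2 := by omega
      simpa [h, h1', h0'] using h3 i h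
    · have h1' : i + 1 < t + 2 := by omega
      have h0' : i < t + 2 := by omega
      simp only [if_pos h0', if_pos h1', if_neg h]
      have e1 : i + 1 = t + 1 := by omega
      have e0 : i = t := by omega
      rw [e1, e0]; exact hle

lemma extend_cap_front {f : ℕ → ℕ → ℝ} {S : Finset ℕ} {t : ℕ} {r : ℕ → ℕ} {z : ℕ}
    (hr : CapIn f S (t + 2) r) (hz : z ∈ S) (hlt : z < r 0)
    (hle : f (r 0) (r 1) ≤ f z (r 0)) :
    CapIn f S (t + 3) (fun i => if i = 0 then z else r (i - 1)) := by
  obtain ⟨h1, h2, h3⟩ := hr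
  refine ⟨fun i hi => ?_, fun i hi => ?_, fun i hi => ?_⟩
  · by_cases h : i = 0
    · simp [h, hz]
    · simp only [if_neg h]
      exact h1 (i - 1) (by omega)
  · by_cases h : i = 0
    · subst h; simpa using hlt
    · have e : i + 1 - 1 = (i - 1) + 1 := by omega
      simp only [if_neg h, if_neg (Nat.succ_ne_zero i), e]
      exact h2 (i - 1) (by omega)
  · by_cases h : i = 0
    · subst h; simpa using hle
    · have e1 : i + 1 - 1 = (i - 1) + 1 := by omega
      have e2 : i + 2 - 1 = (i - 1) + 2 := by omega
      simp only [if_neg h, if_neg (Nat.succ_ne_zero i), if_neg (Nat.succ_ne_zero (i + 1)), e1, e2]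
      exact h3 (i - 1) (by omega)

lemma pair_cup {f : ℕ → ℕ → ℝ} {S : Finset ℕ} {x y : ℕ}
    (hx : x ∈ S) (hy : y ∈ S) (hxy : x < y) : ∃ q, CupIn f S 2 q := by
  refine ⟨fun i => if i = 0 then x else y, fun i hi => ?_, fun i hi => ?_, fun i hi => by omega⟩
  · by_cases h : i = 0 <;> simp [h, hx, hy]
  · have : i = 0 := by omega
    subst this; simpa using hxy

lemma pair_cap {f : ℕ → ℕ → ℝ} {S : Finset ℕ} {x y : ℕ}
    (hx : x ∈ S) (hy : y ∈ S) (hxy : x < y) : ∃ q, CapIn f S 2 q := by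
  refine ⟨fun i => if i = 0 then x else y, fun i hi => ?_, fun i hi => ?_, fun i hi => by omega⟩
  · by_cases h : i = 0 <;> simp [h, hx, hy]
  · have : i = 0 := by omega
    subst this; simpa using hxy

lemma no_two_cup_card {f : ℕ → ℕ → ℝ} {S : Finset ℕ}
    (h : ¬ ∃ q, CupIn f S 2 q) : S.card ≤ 1 := by
  by_contra hc
  obtain ⟨x, hx, y, hy, hxy⟩ := Finset.one_lt_card.1 (show 1 < S.card by omega)
  rcases hxy.lt_or_gt with h' | h'
  · exact h (pair_cup hx hy h')
  · exact h (pair_cup hy hx h')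

lemma no_two_cap_card {f : ℕ → ℕ → ℝ} {S : Finset ℕ}
    (h : ¬ ∃ q, CapIn f S 2 q) : S.card ≤ 1 := by
  by_contra hc
  obtain ⟨x, hx, y, hy, hxy⟩ := Finset.one_lt_card.1 (show 1 < S.card by omega)
  rcases hxy.lt_or_gt with h' | h'
  · exact h (pair_cap hx hy h')
  · exact h (pair_cap hy hx h')

/-- Erdős–Szekeres counting bound for cups and caps. -/
lemma es_aux : ∀ (N a b : ℕ) (f : ℕ → ℕ → ℝ) (S : Finset ℕ), a + b ≤ N →
    (¬ ∃ q, CupIn f S (a + 2) q) → (¬ ∃ q, CapIn f S (b + 2) q) →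
    S.card ≤ (a + b).choose a := by
  intro N
  induction N with
  | zero =>
    intro a b f S hN hcup hcap
    have ha : a = 0 := by omega
    have hb : b = 0 := by omega
    subst ha; subst hb
    simpa using no_two_cup_card hcup
  | succ N ih =>
    intro a b f S hN hcup hcap
    rcases Nat.eq_zero_or_pos a with rfl | ha
    · simpa using no_two_cup_card hcup
    rcases Nat.eq_zero_or_pos b with rfl | hb
    · simpa using no_two_cap_card hcap
    obtain ⟨a', rfl⟩ : ∃ a', a = a' + 1 := ⟨a - 1, by omega⟩
    obtain ⟨b', rfl⟩ : ∃ b', b = b' + 1 := ⟨b - 1, by omega⟩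
    classical
    set A := S.filter (fun p => ∃ c, CupIn f S (a' + 2) c ∧ c (a' + 1) = p) with hA
    have hAS : A ⊆ S := Finset.filter_subset _ _
    have h1 : (S \ A).card ≤ (a' + (b' + 1)).choose a' := by
      apply ih a' (b' + 1) f (S \ A) (by omega)
      · rintro ⟨q, hq⟩
        have hqS : CupIn f S (a' + 2) q := cupIn_mono Finset.sdiff_subset hq
        have hmem : q (a' + 1) ∈ S \ A := hq.1 (a' + 1) (by omega)
        have hinA : q (a' + 1) ∈ A := by
          rw [hA]
          exact Finset.mem_filter.2 ⟨(Finset.mem_sdiff.1 hmem).1, ⟨q, hqS, rfl⟩⟩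
        exact (Finset.mem_sdiff.1 hmem).2 hinA
      · rintro ⟨q, hq⟩
        exact hcap ⟨q, capIn_mono Finset.sdiff_subset hq⟩
    have h2 : A.card ≤ ((a' + 1) + b').choose (a' + 1) := by
      apply ih (a' + 1) b' f A (by omega)
      · rintro ⟨q, hq⟩
        exact hcup ⟨q, cupIn_mono hAS hq⟩
      · rintro ⟨r, hr⟩
        have hr0A : r 0 ∈ A := hr.1 0 (by omega)
        obtain ⟨hr0S, C, hC, hCe⟩ := Finset.mem_filter.1 hr0A
        have hrS : CapIn f S (b' + 2) r := capIn_mono hAS hr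
        rcases le_total (f (C a') (C (a' + 1))) (f (r 0) (r 1)) with h | h
        · have hlt : C (a' + 1) < r 1 := by rw [hCe]; exact hrS.2.1 0 (by omega)
          have hle : f (C a') (C (a' + 1)) ≤ f (C (a' + 1)) (r 1) :=
            le_trans h (le_of_eq (by rw [hCe]))
          exact hcup ⟨_, extend_cup hC (hrS.1 1 (by omega)) hlt hle⟩
        · have hlt : C a' < r 0 := by rw [← hCe]; exact hC.2.1 a' (by omega)
          have hle : f (r 0) (r 1) ≤ f (C a') (r 0) :=
            le_trans h (le_of_eq (by rw [hCe]))
          exact hcap ⟨_, extend_cap_front hrS (hC.1 a' (by omega)) hlt hle⟩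
    have hcd := Finset.card_sdiff_add_card_eq_card hAS
    rw [show (a' + 1) + (b' + 1) = (a' + b' + 1) + 1 from by omega, Nat.choose_succ_succ']
    rw [show a' + (b' + 1) = a' + b' + 1 from by omega] at h1
    rw [show (a' + 1) + b' = a' + b' + 1 from by omega] at h2
    omega

lemma es {k l : ℕ} (hk : 2 ≤ k) (hl : 2 ≤ l) (f : ℕ → ℕ → ℝ) (S : Finset ℕ)
    (hcup : ¬ ∃ q, CupIn f S k q) (hcap : ¬ ∃ q, CapIn f S l q) :
    S.card ≤ (k + l - 4).choose (k - 2) := by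
  obtain ⟨a, rfl⟩ : ∃ a, k = a + 2 := ⟨k - 2, by omega⟩
  obtain ⟨b, rfl⟩ : ∃ b, l = b + 2 := ⟨l - 2, by omega⟩
  rw [show a + 2 + (b + 2) - 4 = a + b from by omega, show a + 2 - 2 = a from by omega]
  exact es_aux (a + b) a b f S le_rfl hcup hcap

/-- Counting bound: if `f` is `(n, n-1)`-free and no index is simultaneously the
end of an `(n-2)`-cup and the beginning of both an `(n-2)`-cap and an
`(n-1)`-cup, then `m ≤ C(2n-5, n-2) - C(2n-7, n-3) + C(2n-8, n-4)`. -/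
theorem counting_bound (n m : ℕ) (hn : 5 ≤ n) (hm : 1 ≤ m)
    (f : ℕ → ℕ → ℝ) (hf : IsFree m f n (n - 1))
    (hno : ∀ q : ℕ, ¬ ((∃ c, IsCup m f (n - 2) c ∧ c (n - 3) = q) ∧
        (∃ c, IsCap m f (n - 2) c ∧ c 0 = q) ∧
        (∃ c, IsCup m f (n - 1) c ∧ c 0 = q))) :
    (m : ℤ) ≤ ((2 * n - 5).choose (n - 2) : ℤ) -
      ((2 * n - 7).choose (n - 3) : ℤ) + ((2 * n - 8).choose (n - 4) : ℤ) := by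
  classical
  obtain ⟨a, rfl⟩ : ∃ a, n = a + 5 := ⟨n - 5, by omega⟩
  simp only [show a + 5 - 1 = a + 4 from by omega, show a + 5 - 2 = a + 3 from by omega,
    show a + 5 - 3 = a + 2 from by omega, show a + 5 - 4 = a + 1 from by omega,
    show 2 * (a + 5) - 5 = 2 * a + 5 from by omega,
    show 2 * (a + 5) - 7 = 2 * a + 3 from by omega,
    show 2 * (a + 5) - 8 = 2 * a + 2 from by omega] at hf hno ⊢
  set S : Finset ℕ := Finset.Icc 1 m with hSdef
  have hcup : ¬ ∃ q, CupIn f S (a + 5) q := fun ⟨q, h⟩ => hf.1 ⟨q, isCup_iff.2 h⟩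
  have hcap : ¬ ∃ q, CapIn f S (a + 4) q := fun ⟨q, h⟩ => hf.2 ⟨q, isCap_iff.2 h⟩
  set EC : ℕ → Prop := fun p => ∃ c, CupIn f S (a + 3) c ∧ c (a + 2) = p with hEC
  set SC : ℕ → Prop := fun p => ∃ c, CapIn f S (a + 3) c ∧ c 0 = p with hSC
  have hno' : ∀ p, EC p → SC p → ¬ ∃ c, CupIn f S (a + 4) c ∧ c 0 = p := by
    rintro p ⟨c1, h1, e1⟩ ⟨c2, h2, e2⟩ ⟨c3, h3, e3⟩
    exact hno p ⟨⟨c1, isCup_iff.2 h1, e1⟩, ⟨c2, isCap_iff.2 h2, e2⟩, ⟨c3, isCup_iff.2 h3, e3⟩⟩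
  set S1 := S.filter (fun p => ¬ EC p) with hS1
  set S2 := S.filter (fun p => EC p ∧ ¬ SC p) with hS2
  set S3 := S.filter (fun p => EC p ∧ SC p) with hS3
  have hcover : S ⊆ S1 ∪ S2 ∪ S3 := by
    intro x hx
    by_cases h1 : EC x
    · by_cases h2 : SC x
      · simp [hS1, hS2, hS3, Finset.mem_union, Finset.mem_filter, hx, h1, h2]
      · simp [hS1, hS2, hS3, Finset.mem_union, Finset.mem_filter, hx, h1, h2]
    · simp [hS1, hS2, hS3, Finset.mem_union, Finset.mem_filter, hx, h1]
  -- bound for S1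
  have b1 : S1.card ≤ (2 * a + 3).choose (a + 1) := by
    have := es (k := a + 3) (l := a + 4) (by omega) (by omega) f S1 ?_ ?_
    · rwa [show a + 3 + (a + 4) - 4 = 2 * a + 3 from by omega,
        show a + 3 - 2 = a + 1 from by omega] at this
    · rintro ⟨q, hq⟩
      have hqS : CupIn f S (a + 3) q := cupIn_mono (Finset.filter_subset _ _) hq
      have hmem : q (a + 2) ∈ S1 := hq.1 (a + 2) (by omega)
      exact (Finset.mem_filter.1 hmem).2 ⟨q, hqS, rfl⟩
    · rintro ⟨q, hq⟩
      exact hcap ⟨q, capIn_mono (Finset.filter_subset _ _) hq⟩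
  -- bound for S2
  have b2 : S2.card ≤ (2 * a + 4).choose (a + 3) := by
    have := es (k := a + 5) (l := a + 3) (by omega) (by omega) f S2 ?_ ?_
    · rwa [show a + 5 + (a + 3) - 4 = 2 * a + 4 from by omega,
        show a + 5 - 2 = a + 3 from by omega] at this
    · rintro ⟨q, hq⟩
      exact hcup ⟨q, cupIn_mono (Finset.filter_subset _ _) hq⟩
    · rintro ⟨r, hr⟩
      have hrS : CapIn f S (a + 3) r := capIn_mono (Finset.filter_subset _ _) hr
      have hmem : r 0 ∈ S2 := hr.1 0 (by omega)
      exact (Finset.mem_filter.1 hmem).2.2 ⟨r, hrS, rfl⟩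
  -- bound for S3
  have b3 : S3.card ≤ (2 * a + 2).choose (a + 1) := by
    have := es (k := a + 3) (l := a + 3) (by omega) (by omega) f S3 ?_ ?_
    · rwa [show a + 3 + (a + 3) - 4 = 2 * a + 2 from by omega,
        show a + 3 - 2 = a + 1 from by omega] at this
    · -- no (a+3)-cup inside S3
      rintro ⟨E, hE⟩
      have hES : CupIn f S (a + 3) E := cupIn_mono (Finset.filter_subset _ _) hE
      have hpmem : E (a + 2) ∈ S3 := hE.1 (a + 2) (by omega)
      obtain ⟨-, -, D, hD, hD0⟩ := Finset.mem_filter.1 hpmem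
      have h0mem : E 0 ∈ S3 := hE.1 0 (by omega)
      obtain ⟨-, hEC0, hSC0⟩ := Finset.mem_filter.1 h0mem
      rcases le_total (f (E (a + 1)) (E (a + 2))) (f (D 0) (D 1)) with h | h
      · -- extend the cup: (a+4)-cup starting at E 0, contradicting hno'
        have hlt : E (a + 2) < D 1 := by rw [← hD0]; exact hD.2.1 0 (by omega)
        have hle : f (E (a + 1)) (E (a + 2)) ≤ f (E (a + 2)) (D 1) :=
          le_trans h (le_of_eq (by rw [hD0]))
        have hext := extend_cup (t := a + 1) hES (hD.1 1 (by omega)) hlt hle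
        exact hno' (E 0) hEC0 hSC0 ⟨_, hext, by simp⟩
      · -- extend the cap in front: (a+4)-cap
        have hlt : E (a + 1) < D 0 := by rw [hD0]; exact hES.2.1 (a + 1) (by omega)
        have hle : f (D 0) (D 1) ≤ f (E (a + 1)) (D 0) :=
          le_trans h (le_of_eq (by rw [hD0]))
        exact hcap ⟨_, extend_cap_front (t := a + 1) hD (hES.1 (a + 1) (by omega)) hlt hle⟩
    · -- no (a+3)-cap inside S3
      rintro ⟨D, hD3⟩
      have hDS : CapIn f S (a + 3) D := capIn_mono (Finset.filter_subset _ _) hD3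
      have h0mem : D 0 ∈ S3 := hD3.1 0 (by omega)
      obtain ⟨-, ⟨C, hC, hCe⟩, -⟩ := Finset.mem_filter.1 h0mem
      rcases le_total (f (C (a + 1)) (C (a + 2))) (f (D 0) (D 1)) with h | h
      · -- extend the cup C by D 1, then use the cap starting at D 1
        have hlt : C (a + 2) < D 1 := by rw [hCe]; exact hDS.2.1 0 (by omega)
        have hle : f (C (a + 1)) (C (a + 2)) ≤ f (C (a + 2)) (D 1) :=
          le_trans h (le_of_eq (by rw [hCe]))
        have hC2 := extend_cup (t := a + 1) hC (hDS.1 1 (by omega)) hlt hle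
        have h1mem : D 1 ∈ S3 := hD3.1 1 (by omega)
        obtain ⟨-, -, D2, hD2, hD2e⟩ := Finset.mem_filter.1 h1mem
        have hq2 : (fun i => if i < a + 3 then C i else D 1) (a + 2) = D 0 := by
          simp only [if_pos (show a + 2 < a + 3 from by omega)]
          exact hCe
        have hq3 : (fun i => if i < a + 3 then C i else D 1) (a + 3) = D 1 := by
          simp
        rcases le_total (f (D 0) (D 1)) (f (D2 0) (D2 1)) with h2 | h2
        · -- an (a+5)-cup
          have hlt2 : (fun i => if i < a + 3 then C i else D 1) (a + 3) < D2 1 := by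
            rw [hq3, ← hD2e]; exact hD2.2.1 0 (by omega)
          have hle2 : f ((fun i => if i < a + 3 then C i else D 1) (a + 2))
              ((fun i => if i < a + 3 then C i else D 1) (a + 3)) ≤
              f ((fun i => if i < a + 3 then C i else D 1) (a + 3)) (D2 1) := by
            rw [hq2, hq3]
            exact le_trans h2 (le_of_eq (by rw [hD2e]))
          exact hcup ⟨_, extend_cup (t := a + 2) hC2 (hD2.1 1 (by omega)) hlt2 hle2⟩
        · -- an (a+4)-cap
          have hlt2 : D 0 < D2 0 := by rw [hD2e]; exact hDS.2.1 0 (by omega)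
          have hle2 : f (D2 0) (D2 1) ≤ f (D 0) (D2 0) :=
            le_trans h2 (le_of_eq (by rw [hD2e]))
          exact hcap ⟨_, extend_cap_front (t := a + 1) hD2 (hDS.1 0 (by omega)) hlt2 hle2⟩
      · -- extend the cap D in front by C (a+1): an (a+4)-cap
        have hlt : C (a + 1) < D 0 := by rw [← hCe]; exact hC.2.1 (a + 1) (by omega)
        have hle : f (D 0) (D 1) ≤ f (C (a + 1)) (D 0) :=
          le_trans h (le_of_eq (by rw [hCe]))
        exact hcap ⟨_, extend_cap_front (t := a + 1) hDS (hC.1 (a + 1) (by omega)) hlt hle⟩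
  -- put everything together
  have hmcard : m = S.card := by rw [hSdef, Nat.card_Icc]; omega
  have hsum : S.card ≤ S1.card + S2.card + S3.card :=
    le_trans (Finset.card_le_card hcover)
      (le_trans (Finset.card_union_le _ _)
        (by have := Finset.card_union_le S1 S2; omega))
  have p1 : (2 * a + 4).choose (a + 2) = (2 * a + 3).choose (a + 1) + (2 * a + 3).choose (a + 2) := by
    rw [show 2 * a + 4 = (2 * a + 3) + 1 from by omega, show a + 2 = (a + 1) + 1 from by omega,
      Nat.choose_succ_succ']
  have p2 : (2 * a + 5).choose (a + 3) = (2 * a + 4).choose (a + 2) + (2 * a + 4).choose (a + 3) := by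
    rw [show 2 * a + 5 = (2 * a + 4) + 1 from by omega, show a + 3 = (a + 2) + 1 from by omega,
      Nat.choose_succ_succ']
  have key : m + (2 * a + 3).choose (a + 2) ≤ (2 * a + 5).choose (a + 3) + (2 * a + 2).choose (a + 1) := by
    omega
  omega
end
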